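/- Let 𝒴 ⊂ ℝ be a finite set, let 𝒜, 𝒢₁, ℬ₁, 𝒢₂ be finite types, let p be a strictly positive probability mass function on 𝒴 × 𝒜 × 𝒢₁ × ℬ₁ × 𝒢₂, and fix a ∈ 𝒜. If G₁ ⊥ (A, G₂) | B₁ under p, then for every (g₁, b₁): ∑_{(y,a′,g₂)} p(y,a′,g₂ | g₁,b₁) · ( ψ_a^{B₁,G₂}(y,a′,b₁,g₂) − ψ_a^{(G₁,B₁),G₂}(y,a′,g₁,b₁,g₂) ) = 0; that is, the difference of the two influence functions has vanishing conditional expectation given (G₁, B₁). -/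
import Mathlib


open Finset

noncomputable section

variable {Y : Finset ℝ} {A G₁ B₁ G₂ : Type}
variable [Fintype A] [Fintype G₁] [Fintype B₁] [Fintype G₂] [DecidableEq A]

/-- Marginal `p(g₁)`. -/
def pG1 (p : Y × A × G₁ × B₁ × G₂ → ℝ) (g₁ : G₁) : ℝ :=
  ∑ y : Y, ∑ a : A, ∑ b₁ : B₁, ∑ g₂ : G₂, p (y, a, g₁, b₁, g₂)

/-- Marginal `p(b₁)`. -/
def pB1 (p : Y × A × G₁ × B₁ × G₂ → ℝ) (b₁ : B₁) : ℝ :=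
  ∑ y : Y, ∑ a : A, ∑ g₁ : G₁, ∑ g₂ : G₂, p (y, a, g₁, b₁, g₂)

/-- Marginal `p(g₂)`. -/
def pG2 (p : Y × A × G₁ × B₁ × G₂ → ℝ) (g₂ : G₂) : ℝ :=
  ∑ y : Y, ∑ a : A, ∑ g₁ : G₁, ∑ b₁ : B₁, p (y, a, g₁, b₁, g₂)

/-- Marginal `p(g₁, b₁)`. -/
def pG1B1 (p : Y × A × G₁ × B₁ × G₂ → ℝ) (g₁ : G₁) (b₁ : B₁) : ℝ :=
  ∑ y : Y, ∑ a : A, ∑ g₂ : G₂, p (y, a, g₁, b₁, g₂)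

/-- Marginal `p(a, b₁, g₂)`. -/
def pAB1G2 (p : Y × A × G₁ × B₁ × G₂ → ℝ) (a : A) (b₁ : B₁) (g₂ : G₂) : ℝ :=
  ∑ y : Y, ∑ g₁ : G₁, p (y, a, g₁, b₁, g₂)

/-- Marginal `p(a, g₁, b₁, g₂)`. -/
def pAG1B1G2 (p : Y × A × G₁ × B₁ × G₂ → ℝ) (a : A) (g₁ : G₁) (b₁ : B₁) (g₂ : G₂) : ℝ :=
  ∑ y : Y, p (y, a, g₁, b₁, g₂)

/-- Marginal `p(a, g₁, g₂)`. -/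
def pAG1G2 (p : Y × A × G₁ × B₁ × G₂ → ℝ) (a : A) (g₁ : G₁) (g₂ : G₂) : ℝ :=
  ∑ y : Y, ∑ b₁ : B₁, p (y, a, g₁, b₁, g₂)

/-- Outcome regression `m_B(b₁,g₂) = ∑_y y·p(y | a, b₁, g₂)` for the
adjustment set `(B₁, G₂)`. -/
def mB (p : Y × A × G₁ × B₁ × G₂ → ℝ) (a : A) (b₁ : B₁) (g₂ : G₂) : ℝ :=
  ∑ y : Y, (y : ℝ) * ((∑ g₁ : G₁, p (y, a, g₁, b₁, g₂)) / pAB1G2 p a b₁ g₂)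

/-- Outcome regression `m_{GB}(g₁,b₁,g₂) = ∑_y y·p(y | a, g₁, b₁, g₂)` for
the adjustment set `((G₁, B₁), G₂)`. -/
def mGB (p : Y × A × G₁ × B₁ × G₂ → ℝ) (a : A) (g₁ : G₁) (b₁ : B₁) (g₂ : G₂) : ℝ :=
  ∑ y : Y, (y : ℝ) * (p (y, a, g₁, b₁, g₂) / pAG1B1G2 p a g₁ b₁ g₂)

/-- Outcome regression `m_{GG}(g₁,g₂) = ∑_y y·p(y | a, g₁, g₂)` for the
adjustment set `(G₁, G₂)`. -/
def mGG (p : Y × A × G₁ × B₁ × G₂ → ℝ) (a : A) (g₁ : G₁) (g₂ : G₂) : ℝ :=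
  ∑ y : Y, (y : ℝ) * ((∑ b₁ : B₁, p (y, a, g₁, b₁, g₂)) / pAG1G2 p a g₁ g₂)

/-- Target parameter for the adjustment set `(B₁, G₂)`. -/
def TB (p : Y × A × G₁ × B₁ × G₂ → ℝ) (a : A) : ℝ :=
  ∑ b₁ : B₁, pB1 p b₁ * ∑ g₂ : G₂, pG2 p g₂ * mB p a b₁ g₂

/-- Target parameter for the adjustment set `((G₁, B₁), G₂)`. -/
def TGB (p : Y × A × G₁ × B₁ × G₂ → ℝ) (a : A) : ℝ :=
  ∑ g₁ : G₁, ∑ b₁ : B₁, pG1B1 p g₁ b₁ * ∑ g₂ : G₂, pG2 p g₂ * mGB p a g₁ b₁ g₂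

/-- Target parameter for the adjustment set `(G₁, G₂)`. -/
def TGG (p : Y × A × G₁ × B₁ × G₂ → ℝ) (a : A) : ℝ :=
  ∑ g₁ : G₁, pG1 p g₁ * ∑ g₂ : G₂, pG2 p g₂ * mGG p a g₁ g₂

/-- Influence function `ψ_a^{B₁,G₂}` for the adjustment set `(B₁, G₂)`. -/
def psiB (p : Y × A × G₁ × B₁ × G₂ → ℝ) (a : A)
    (y : Y) (a' : A) (b₁ : B₁) (g₂ : G₂) : ℝ :=
  (if a' = a then (1 : ℝ) else 0) * (pB1 p b₁ * pG2 p g₂ / pAB1G2 p a b₁ g₂) *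
      ((y : ℝ) - mB p a b₁ g₂)
    + (∑ g₂' : G₂, pG2 p g₂' * mB p a b₁ g₂')
    + (∑ b₁' : B₁, pB1 p b₁' * mB p a b₁' g₂)
    - 2 * TB p a

/-- Influence function `ψ_a^{(G₁,B₁),G₂}` for the adjustment set `((G₁, B₁), G₂)`. -/
def psiGB (p : Y × A × G₁ × B₁ × G₂ → ℝ) (a : A)
    (y : Y) (a' : A) (g₁ : G₁) (b₁ : B₁) (g₂ : G₂) : ℝ :=
  (if a' = a then (1 : ℝ) else 0) *
      (pG1B1 p g₁ b₁ * pG2 p g₂ / pAG1B1G2 p a g₁ b₁ g₂) *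
      ((y : ℝ) - mGB p a g₁ b₁ g₂)
    + (∑ g₂' : G₂, pG2 p g₂' * mGB p a g₁ b₁ g₂')
    + (∑ g₁' : G₁, ∑ b₁' : B₁, pG1B1 p g₁' b₁' * mGB p a g₁' b₁' g₂)
    - 2 * TGB p a

/-- Influence function `ψ_a^{G₁,G₂}` for the adjustment set `(G₁, G₂)`. -/
def psiGG (p : Y × A × G₁ × B₁ × G₂ → ℝ) (a : A)
    (y : Y) (a' : A) (g₁ : G₁) (g₂ : G₂) : ℝ :=
  (if a' = a then (1 : ℝ) else 0) * (pG1 p g₁ * pG2 p g₂ / pAG1G2 p a g₁ g₂) *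
      ((y : ℝ) - mGG p a g₁ g₂)
    + (∑ g₂' : G₂, pG2 p g₂' * mGG p a g₁ g₂')
    + (∑ g₁' : G₁, pG1 p g₁' * mGG p a g₁' g₂)
    - 2 * TGG p a

/-- Conditional independence `G₁ ⊥ (A, G₂) | B₁` under `p`. -/
def CI_G1_AG2_B1 (p : Y × A × G₁ × B₁ × G₂ → ℝ) : Prop :=
  ∀ (g₁ : G₁) (a : A) (g₂ : G₂) (b₁ : B₁),
    (∑ y : Y, p (y, a, g₁, b₁, g₂)) / pB1 p b₁ =
      (pG1B1 p g₁ b₁ / pB1 p b₁) * (pAB1G2 p a b₁ g₂ / pB1 p b₁)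

/-- Conditional independence `Y ⊥ B₁ | (A, G₁, G₂)` under `p`. -/
def CI_Y_B1_AG1G2 (p : Y × A × G₁ × B₁ × G₂ → ℝ) : Prop :=
  ∀ (y : Y) (a : A) (g₁ : G₁) (b₁ : B₁) (g₂ : G₂),
    p (y, a, g₁, b₁, g₂) / pAG1G2 p a g₁ g₂ =
      ((∑ b₁' : B₁, p (y, a, g₁, b₁', g₂)) / pAG1G2 p a g₁ g₂) *
        (pAG1B1G2 p a g₁ b₁ g₂ / pAG1G2 p a g₁ g₂)

/-- Variance of a real function of the observation under `p`. -/
def VarP (p : Y × A × G₁ × B₁ × G₂ → ℝ) (f : Y × A × G₁ × B₁ × G₂ → ℝ) : ℝ :=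
  (∑ o : Y × A × G₁ × B₁ × G₂, p o * f o ^ 2) -
    (∑ o : Y × A × G₁ × B₁ × G₂, p o * f o) ^ 2

private lemma sum_pos' {ι : Type*} [Fintype ι] [Nonempty ι] {f : ι → ℝ}
    (hf : ∀ i, 0 < f i) : 0 < ∑ i, f i :=
  Finset.sum_pos (fun i _ => hf i) Finset.univ_nonempty

/-- First orthogonality condition in the proof of Lemma 4.3: given
`G₁ ⊥ (A, G₂) | B₁`, the difference of the two influence functions has
vanishing conditional expectation given `(G₁, B₁)`. -/
theorem psi_difference_condExp_G1B1
    (p : Y × A × G₁ × B₁ × G₂ → ℝ)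
    (hpos : ∀ o, 0 < p o) (hsum : ∑ o, p o = 1) (a : A)
    (hCI : CI_G1_AG2_B1 p) :
    ∀ (g₁ : G₁) (b₁ : B₁),
      ∑ y : Y, ∑ a' : A, ∑ g₂ : G₂,
        (p (y, a', g₁, b₁, g₂) / pG1B1 p g₁ b₁) *
          (psiB p a y a' b₁ g₂ - psiGB p a y a' g₁ b₁ g₂) = 0 := by
  -- nonemptiness
  have hne : Nonempty (Y × A × G₁ × B₁ × G₂) := by
    by_contra h
    rw [not_nonempty_iff] at h
    rw [Finset.univ_eq_empty, Finset.sum_empty] at hsum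
    exact zero_ne_one hsum
  obtain ⟨⟨y0, a0, g10, b10, g20⟩⟩ := hne
  haveI : Nonempty Y := ⟨y0⟩
  haveI : Nonempty A := ⟨a0⟩
  haveI : Nonempty G₁ := ⟨g10⟩
  haveI : Nonempty B₁ := ⟨b10⟩
  haveI : Nonempty G₂ := ⟨g20⟩
  -- positivity of marginals
  have hpB1 : ∀ b₁, 0 < pB1 p b₁ := fun b₁ =>
    sum_pos' fun _ => sum_pos' fun _ => sum_pos' fun _ => sum_pos' fun _ => hpos _
  have hpG1B1 : ∀ g₁ b₁, 0 < pG1B1 p g₁ b₁ := fun g₁ b₁ =>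
    sum_pos' fun _ => sum_pos' fun _ => sum_pos' fun _ => hpos _
  have hpAB1G2 : ∀ a' b₁ g₂, 0 < pAB1G2 p a' b₁ g₂ := fun a' b₁ g₂ =>
    sum_pos' fun _ => sum_pos' fun _ => hpos _
  have hpAG1B1G2 : ∀ a' g₁ b₁ g₂, 0 < pAG1B1G2 p a' g₁ b₁ g₂ := fun a' g₁ b₁ g₂ =>
    sum_pos' fun _ => hpos _
  -- key factorization identity from conditional independence
  have hkey : ∀ (a' : A) (g₁ : G₁) (b₁ : B₁) (g₂ : G₂),
      pAG1B1G2 p a' g₁ b₁ g₂ * pB1 p b₁ = pG1B1 p g₁ b₁ * pAB1G2 p a' b₁ g₂ := by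
    intro a' g₁ b₁ g₂
    have h := hCI g₁ a' g₂ b₁
    have hdef : (∑ y : Y, p (y, a', g₁, b₁, g₂)) = pAG1B1G2 p a' g₁ b₁ g₂ := rfl
    rw [hdef] at h
    have hb := (hpB1 b₁).ne'
    field_simp at h
    nlinarith [h, hpB1 b₁]
  -- L1 : collapsing g₁' sums
  have hL1 : ∀ (b₁' : B₁) (g₂ : G₂),
      (∑ g₁' : G₁, pG1B1 p g₁' b₁' * mGB p a g₁' b₁' g₂) = pB1 p b₁' * mB p a b₁' g₂ := by
    intro b₁' g₂
    have h1 : ∀ g₁' : G₁, pG1B1 p g₁' b₁' * mGB p a g₁' b₁' g₂ =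
        ∑ y : Y, (y : ℝ) * (pB1 p b₁' * (p (y, a, g₁', b₁', g₂) / pAB1G2 p a b₁' g₂)) := by
      intro g₁'
      rw [mGB, Finset.mul_sum]
      refine Finset.sum_congr rfl fun y _ => ?_
      have key := hkey a g₁' b₁' g₂
      have h2 := (hpAG1B1G2 a g₁' b₁' g₂).ne'
      have h3 := (hpAB1G2 a b₁' g₂).ne'
      field_simp
      linear_combination (-((y : ℝ) * p (y, a, g₁', b₁', g₂))) * key
    calc (∑ g₁' : G₁, pG1B1 p g₁' b₁' * mGB p a g₁' b₁' g₂)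
        = ∑ g₁' : G₁, ∑ y : Y,
            (y : ℝ) * (pB1 p b₁' * (p (y, a, g₁', b₁', g₂) / pAB1G2 p a b₁' g₂)) :=
          Finset.sum_congr rfl fun g₁' _ => h1 g₁'
      _ = ∑ y : Y, ∑ g₁' : G₁,
            (y : ℝ) * (pB1 p b₁' * (p (y, a, g₁', b₁', g₂) / pAB1G2 p a b₁' g₂)) :=
          Finset.sum_comm
      _ = pB1 p b₁' * mB p a b₁' g₂ := by
          rw [mB, Finset.mul_sum]
          refine Finset.sum_congr rfl fun y _ => ?_
          rw [← Finset.mul_sum, ← Finset.mul_sum, ← Finset.sum_div]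
          ring
  -- equality of the double-sum terms
  have hgeq : ∀ g₂ : G₂,
      (∑ g₁' : G₁, ∑ b₁' : B₁, pG1B1 p g₁' b₁' * mGB p a g₁' b₁' g₂) =
        ∑ b₁' : B₁, pB1 p b₁' * mB p a b₁' g₂ := by
    intro g₂
    rw [Finset.sum_comm]
    exact Finset.sum_congr rfl fun b₁' _ => hL1 b₁' g₂
  -- equality of target parameters
  have hTeq : TGB p a = TB p a := by
    rw [TGB, TB]
    rw [Finset.sum_comm]
    refine Finset.sum_congr rfl fun b₁' _ => ?_
    calc (∑ g₁' : G₁, pG1B1 p g₁' b₁' * ∑ g₂ : G₂, pG2 p g₂ * mGB p a g₁' b₁' g₂)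
        = ∑ g₁' : G₁, ∑ g₂ : G₂, pG2 p g₂ * (pG1B1 p g₁' b₁' * mGB p a g₁' b₁' g₂) := by
          refine Finset.sum_congr rfl fun g₁' _ => ?_
          rw [Finset.mul_sum]; exact Finset.sum_congr rfl fun g₂ _ => by ring
      _ = ∑ g₂ : G₂, ∑ g₁' : G₁, pG2 p g₂ * (pG1B1 p g₁' b₁' * mGB p a g₁' b₁' g₂) :=
          Finset.sum_comm
      _ = ∑ g₂ : G₂, pG2 p g₂ * (pB1 p b₁' * mB p a b₁' g₂) := by
          refine Finset.sum_congr rfl fun g₂ _ => ?_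
          rw [← Finset.mul_sum, hL1 b₁' g₂]
      _ = pB1 p b₁' * ∑ g₂ : G₂, pG2 p g₂ * mB p a b₁' g₂ := by
          rw [Finset.mul_sum]; exact Finset.sum_congr rfl fun g₂ _ => by ring
  intro g₁ b₁
  have hP := (hpG1B1 g₁ b₁).ne'
  -- equal "clever covariate" coefficients
  have hc : ∀ g₂ : G₂,
      pG1B1 p g₁ b₁ * pG2 p g₂ / pAG1B1G2 p a g₁ b₁ g₂ =
        pB1 p b₁ * pG2 p g₂ / pAB1G2 p a b₁ g₂ := by
    intro g₂
    have key := hkey a g₁ b₁ g₂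
    have h2 := (hpAG1B1G2 a g₁ b₁ g₂).ne'
    have h3 := (hpAB1G2 a b₁ g₂).ne'
    rw [div_eq_div_iff h2 h3]
    linear_combination (-(pG2 p g₂)) * key
  -- pointwise simplification of the difference of influence functions
  have hptw : ∀ (y : Y) (a' : A) (g₂ : G₂),
      psiB p a y a' b₁ g₂ - psiGB p a y a' g₁ b₁ g₂ =
        (if a' = a then (1 : ℝ) else 0) *
          ((pB1 p b₁ * pG2 p g₂ / pAB1G2 p a b₁ g₂) *
            (mGB p a g₁ b₁ g₂ - mB p a b₁ g₂)) +
        ((∑ g₂' : G₂, pG2 p g₂' * mB p a b₁ g₂') -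
          (∑ g₂' : G₂, pG2 p g₂' * mGB p a g₁ b₁ g₂')) := by
    intro y a' g₂
    rw [psiB, psiGB, hTeq, hgeq g₂, hc g₂]
    ring
  -- normalization of the conditional law
  have hq1 : (∑ y : Y, ∑ a' : A, ∑ g₂ : G₂, p (y, a', g₁, b₁, g₂) / pG1B1 p g₁ b₁) = 1 := by
    have : (∑ y : Y, ∑ a' : A, ∑ g₂ : G₂, p (y, a', g₁, b₁, g₂) / pG1B1 p g₁ b₁) =
        (∑ y : Y, ∑ a' : A, ∑ g₂ : G₂, p (y, a', g₁, b₁, g₂)) / pG1B1 p g₁ b₁ := by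
      simp only [Finset.sum_div]
    rw [this]
    have hdef : (∑ y : Y, ∑ a' : A, ∑ g₂ : G₂, p (y, a', g₁, b₁, g₂)) = pG1B1 p g₁ b₁ := rfl
    rw [hdef, div_self hP]
  -- collapse of the indicator sum
  have hcollapse : ∀ (f : A → ℝ) (C : ℝ),
      (∑ a' : A, f a' * ((if a' = a then (1 : ℝ) else 0) * C)) = f a * C := by
    intro f C
    rw [Finset.sum_eq_single a (fun b _ hb => by simp [hb]) (fun h => absurd (Finset.mem_univ a) h)]
    simp
  set K : ℝ := (∑ g₂' : G₂, pG2 p g₂' * mB p a b₁ g₂') -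
      (∑ g₂' : G₂, pG2 p g₂' * mGB p a g₁ b₁ g₂') with hK
  -- main computation
  calc (∑ y : Y, ∑ a' : A, ∑ g₂ : G₂,
        (p (y, a', g₁, b₁, g₂) / pG1B1 p g₁ b₁) *
          (psiB p a y a' b₁ g₂ - psiGB p a y a' g₁ b₁ g₂))
      = (∑ y : Y, ∑ a' : A, ∑ g₂ : G₂,
          (p (y, a', g₁, b₁, g₂) / pG1B1 p g₁ b₁) *
            ((if a' = a then (1 : ℝ) else 0) *
              ((pB1 p b₁ * pG2 p g₂ / pAB1G2 p a b₁ g₂) *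
                (mGB p a g₁ b₁ g₂ - mB p a b₁ g₂)))) +
        (∑ y : Y, ∑ a' : A, ∑ g₂ : G₂,
          (p (y, a', g₁, b₁, g₂) / pG1B1 p g₁ b₁) * K) := by
        rw [← Finset.sum_add_distrib]
        refine Finset.sum_congr rfl fun y _ => ?_
        rw [← Finset.sum_add_distrib]
        refine Finset.sum_congr rfl fun a' _ => ?_
        rw [← Finset.sum_add_distrib]
        refine Finset.sum_congr rfl fun g₂ _ => ?_
        rw [hptw y a' g₂]; ring
    _ = (∑ g₂ : G₂, pG2 p g₂ * (mGB p a g₁ b₁ g₂ - mB p a b₁ g₂)) + K := by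
        congr 1
        · -- the indicator part
          calc (∑ y : Y, ∑ a' : A, ∑ g₂ : G₂,
                (p (y, a', g₁, b₁, g₂) / pG1B1 p g₁ b₁) *
                  ((if a' = a then (1 : ℝ) else 0) *
                    ((pB1 p b₁ * pG2 p g₂ / pAB1G2 p a b₁ g₂) *
                      (mGB p a g₁ b₁ g₂ - mB p a b₁ g₂))))
              = ∑ y : Y, ∑ g₂ : G₂, ∑ a' : A,
                (p (y, a', g₁, b₁, g₂) / pG1B1 p g₁ b₁) *
                  ((if a' = a then (1 : ℝ) else 0) *
                    ((pB1 p b₁ * pG2 p g₂ / pAB1G2 p a b₁ g₂) *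
                      (mGB p a g₁ b₁ g₂ - mB p a b₁ g₂))) :=
                Finset.sum_congr rfl fun y _ => Finset.sum_comm
            _ = ∑ y : Y, ∑ g₂ : G₂,
                (p (y, a, g₁, b₁, g₂) / pG1B1 p g₁ b₁) *
                  ((pB1 p b₁ * pG2 p g₂ / pAB1G2 p a b₁ g₂) *
                    (mGB p a g₁ b₁ g₂ - mB p a b₁ g₂)) := by
                refine Finset.sum_congr rfl fun y _ => Finset.sum_congr rfl fun g₂ _ => ?_
                exact hcollapse (fun a' => p (y, a', g₁, b₁, g₂) / pG1B1 p g₁ b₁) _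
            _ = ∑ g₂ : G₂, ∑ y : Y,
                (p (y, a, g₁, b₁, g₂) / pG1B1 p g₁ b₁) *
                  ((pB1 p b₁ * pG2 p g₂ / pAB1G2 p a b₁ g₂) *
                    (mGB p a g₁ b₁ g₂ - mB p a b₁ g₂)) := Finset.sum_comm
            _ = ∑ g₂ : G₂, pG2 p g₂ * (mGB p a g₁ b₁ g₂ - mB p a b₁ g₂) := by
                refine Finset.sum_congr rfl fun g₂ _ => ?_
                rw [← Finset.sum_mul, ← Finset.sum_div]
                have hdef : (∑ y : Y, p (y, a, g₁, b₁, g₂)) = pAG1B1G2 p a g₁ b₁ g₂ := rfl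
                rw [hdef]
                have key := hkey a g₁ b₁ g₂
                have h3 := (hpAB1G2 a b₁ g₂).ne'
                have hcoef : pAG1B1G2 p a g₁ b₁ g₂ / pG1B1 p g₁ b₁ *
                    (pB1 p b₁ * pG2 p g₂ / pAB1G2 p a b₁ g₂) = pG2 p g₂ := by
                  field_simp
                  linear_combination (pG2 p g₂) * key
                rw [← mul_assoc, hcoef]
        · -- the constant part
          calc (∑ y : Y, ∑ a' : A, ∑ g₂ : G₂,
                (p (y, a', g₁, b₁, g₂) / pG1B1 p g₁ b₁) * K)
              = (∑ y : Y, ∑ a' : A, ∑ g₂ : G₂,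
                  p (y, a', g₁, b₁, g₂) / pG1B1 p g₁ b₁) * K := by
                simp only [Finset.sum_mul]
            _ = K := by rw [hq1, one_mul]
    _ = 0 := by
        rw [hK]
        have : (∑ g₂ : G₂, pG2 p g₂ * (mGB p a g₁ b₁ g₂ - mB p a b₁ g₂)) =
            (∑ g₂ : G₂, pG2 p g₂ * mGB p a g₁ b₁ g₂) -
              (∑ g₂ : G₂, pG2 p g₂ * mB p a b₁ g₂) := by
          rw [← Finset.sum_sub_distrib]
          exact Finset.sum_congr rfl fun g₂ _ => by ring
        rw [this]; ring

end
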